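/- Let A be a finite alphabet and φ: A* → A* a morphism in Class P_ret. If ψ: A* → A* is a right conjugate of φ, i.e., there exists a word x ∈ A* such that ψ(a)x = xφ(a) for every letter a ∈ A, then ψ also belongs to Class P_ret. -/

import Mathlib

open List

/-- Apply a morphism (given by its values on letters) to a finite word. -/
def applyM {A : Type*} (φ : A → List A) (v : List A) : List A := v.flatMap φ

/-- The set of occurrences of `w` as a factor of `u`:
indices `i` such that the block of `u` of length `|w|` starting at `i` equals `w`. -/
def occs {A : Type*} [DecidableEq A] (w u : List A) : Finset ℕ :=
  (Finset.range (u.length + 1)).filter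
    (fun i => i + w.length ≤ u.length ∧ (u.drop i).take w.length = w)

/-- A morphism `φ` belongs to Class `P_ret` with marker `w` if it is injective on
letters, `w` is a palindrome, and for each letter `a` the word `φ(a)w` is a palindrome
in which `w` occurs exactly twice, namely as a prefix (position `0`) and as a suffix
(position `|φ(a)|`, distinct from `0`). -/
def IsPretWithMarker {A : Type*} [DecidableEq A] (φ : A → List A) (w : List A) : Prop :=
  Function.Injective φ ∧ w.reverse = w ∧
    ∀ a : A, (φ a ++ w).reverse = φ a ++ w ∧
      occs w (φ a ++ w) = {0, (φ a).length} ∧ (φ a).length ≠ 0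

/-- The block of length `len` of the infinite word `u` starting at position `i`. -/
def factorAt {A : Type*} (u : ℕ → A) (i len : ℕ) : List A :=
  (List.range len).map fun k => u (i + k)

/-- `i` is an occurrence of the finite word `v` in the infinite word `u`. -/
def OccursAt {A : Type*} (u : ℕ → A) (v : List A) (i : ℕ) : Prop :=
  factorAt u i v.length = v

/-- `v` belongs to the language of the infinite word `u`, i.e. `v` is a factor of `u`. -/
def InLang {A : Type*} (u : ℕ → A) (v : List A) : Prop := ∃ i, OccursAt u v i

/-- The image `φ(u) = φ(u₀)φ(u₁)φ(u₂)⋯` of an infinite word `u` under a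
(non-erasing) morphism `φ`, as an infinite word. -/
def applyInf {A : Type*} (φ : A → List A) (u : ℕ → A) (n : ℕ) : A :=
  (((List.range (n + 1)).flatMap fun i => φ (u i))).getD n (u 0)

/-- The language of `u` is closed under reversal. -/
def ClosedUnderReversal {A : Type*} (u : ℕ → A) : Prop :=
  ∀ v : List A, InLang u v → InLang u v.reverse

/-- A finite word is rich if its number of palindromic factors (including `ε`)
equals its length plus one. -/
def RichWord {A : Type*} (u : List A) : Prop :=
  {p : List A | p <:+: u ∧ p.reverse = p}.ncard = u.length + 1

/-- An infinite word is rich if all its finite prefixes are rich. -/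
def RichInf {A : Type*} (u : ℕ → A) : Prop := ∀ n : ℕ, RichWord (factorAt u 0 n)

/-- An infinite word is recurrent if each of its factors occurs infinitely often. -/
def Recurrent {A : Type*} (u : ℕ → A) : Prop :=
  ∀ v : List A, InLang u v → ∀ N : ℕ, ∃ i, N ≤ i ∧ OccursAt u v i

/-- `r` is a return word to `w` in the infinite word `u`: `wr ∈ L(u)` and `w`
occurs in `wr` exactly twice, as a prefix and as a suffix. -/
def IsReturnWord {A : Type*} [DecidableEq A] (u : ℕ → A) (w r : List A) : Prop :=
  r ≠ [] ∧ InLang u (w ++ r) ∧ occs w (w ++ r) = {0, r.length}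

/-- Left extensions of `x` in the language of `u`. -/
def leftExt {A : Type*} (u : ℕ → A) (x : List A) : Set A := {a | InLang u (a :: x)}

/-- Right extensions of `x` in the language of `u`. -/
def rightExt {A : Type*} (u : ℕ → A) (x : List A) : Set A := {b | InLang u (x ++ [b])}

/-- Bi-extensions of `x` in the language of `u`. -/
def biExt {A : Type*} (u : ℕ → A) (x : List A) : Set (A × A) :=
  {p | InLang u (p.1 :: (x ++ [p.2]))}

/-- `x` is bispecial in `u`. -/
def Bispecial {A : Type*} (u : ℕ → A) (x : List A) : Prop :=
  2 ≤ (leftExt u x).ncard ∧ 2 ≤ (rightExt u x).ncard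

/-- The bilateral order `b_u(x) = #B_u(x) − #L_u(x) − #R_u(x) + 1`. -/
noncomputable def bilateralOrder {A : Type*} (u : ℕ → A) (x : List A) : ℤ :=
  ((biExt u x).ncard : ℤ) - (leftExt u x).ncard - (rightExt u x).ncard + 1

/-- The number of palindromic extensions of `x` in `u`. -/
noncomputable def pext {A : Type*} (u : ℕ → A) (x : List A) : ℕ :=
  {a | InLang u (a :: (x ++ [a]))}.ncard

/-- Arnoux-Rauzy morphisms: the monoid of morphisms generated by permutations of the
alphabet and by the elementary morphisms `ψ_a : a ↦ a, b ↦ ab` and `ψ̄_a : a ↦ a, b ↦ ba`. -/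
inductive IsAR {A : Type*} [DecidableEq A] : (A → List A) → Prop
  | perm (π : Equiv.Perm A) : IsAR (fun a => [π a])
  | psiL (a : A) : IsAR (fun b => if b = a then [a] else [a, b])
  | psiR (a : A) : IsAR (fun b => if b = a then [a] else [b, a])
  | comp {φ ψ : A → List A} : IsAR φ → IsAR ψ → IsAR (fun a => applyM φ (ψ a))

/-- The `k`-th power `φ^k` of a morphism. -/
def powM {A : Type*} (φ : A → List A) : ℕ → A → List A
  | 0, a => [a]
  | n + 1, a => applyM (powM φ n) (φ a)

/-- A morphism is primitive if some power of it maps every letter to a word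
containing every letter. -/
def PrimitiveM {A : Type*} (φ : A → List A) : Prop :=
  ∃ k : ℕ, ∀ a b : A, b ∈ powM φ k a

/-- A (acyclic) morphism is marked: it has a rightmost conjugate `φR` whose
last-letter map is injective, and a leftmost conjugate `φL` whose first-letter map
is injective. -/
def Marked {A : Type*} (φ : A → List A) : Prop :=
  ∃ (φR φL : A → List A) (x y : List A),
    (∀ a, φ a ++ x = x ++ φR a) ∧
    (∀ a, φL a ++ y = y ++ φ a) ∧
    (∃ a b : A, (φR a).getLast? ≠ (φR b).getLast?) ∧
    (∃ a b : A, (φL a).head? ≠ (φL b).head?) ∧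
    Function.Injective (fun c => (φR c).getLast?) ∧
    Function.Injective (fun c => (φL c).head?)

lemma mem_occs {A : Type*} [DecidableEq A] {w u : List A} {i : ℕ} :
    i ∈ occs w u ↔ i + w.length ≤ u.length ∧ (u.drop i).take w.length = w := by
  unfold occs
  simp only [Finset.mem_filter, Finset.mem_range]
  exact ⟨fun h => h.2, fun h => ⟨by omega, h⟩⟩

/-- Every right conjugate of a `P_ret` morphism belongs to `P_ret`. -/
theorem pret_right_conjugate {A : Type*} [Fintype A] [DecidableEq A]
    (φ ψ : A → List A) (w : List A) (h : IsPretWithMarker φ w)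
    (x : List A) (hconj : ∀ a : A, ψ a ++ x = x ++ φ a) :
    ∃ w' : List A, IsPretWithMarker ψ w' := by
  obtain ⟨hinj, hwpal, hP⟩ := h
  set w' := x ++ w ++ x.reverse with hw'def
  have hw'pal : w'.reverse = w' := by
    simp [hw'def, List.reverse_append, hwpal, List.append_assoc]
  refine ⟨w', ?_, hw'pal, ?_⟩
  · -- injectivity of ψ
    intro a b hab
    apply hinj
    apply List.append_cancel_left (as := x)
    rw [← hconj a, ← hconj b, hab]
  · intro a
    obtain ⟨hpal, hocc, hne⟩ := hP a
    have hlen : (ψ a).length = (φ a).length := by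
      have := congrArg List.length (hconj a)
      simp only [List.length_append] at this
      omega
    have hcomm : φ a ++ w = w ++ (φ a).reverse := by
      conv_lhs => rw [← hpal]
      rw [List.reverse_append, hwpal]
    have hrev : (φ a).reverse ++ x.reverse = x.reverse ++ (ψ a).reverse := by
      have := congrArg List.reverse (hconj a)
      simp only [List.reverse_append] at this
      exact this.symm
    have hU : ψ a ++ w' = x ++ (φ a ++ w) ++ x.reverse := by
      rw [hw'def]
      simp only [← List.append_assoc]
      rw [hconj a]
    have hU2 : ψ a ++ w' = w' ++ (ψ a).reverse := by
      rw [hU, hcomm, hw'def]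
      simp only [List.append_assoc]
      rw [hrev]
    refine ⟨?_, ?_, ?_⟩
    · -- palindromicity of ψ a ++ w'
      conv_lhs => rw [hU2]
      rw [List.reverse_append, List.reverse_reverse, hw'pal, hU2]
    · -- occurrence set
      ext i
      simp only [mem_occs, Finset.mem_insert, Finset.mem_singleton]
      have hlw' : w'.length = x.length + w.length + x.length := by
        simp only [hw'def, List.length_append, List.length_reverse]
      constructor
      · rintro ⟨hle, htk⟩
        have hiL : i ≤ (φ a).length := by
          simp only [List.length_append, hlw', hlen] at hle ⊢
          omega
        -- slice out the middle w
        have hwslice : (w'.drop x.length).take w.length = w := by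
          rw [hw'def, List.append_assoc, List.drop_left, List.take_append_of_le_length le_rfl,
            List.take_length]
        have hmid : ((((ψ a ++ w').drop i).take w'.length).drop x.length).take w.length = w := by
          rw [htk, hwslice]
        rw [List.drop_take, List.take_take] at hmid
        have hmin : w.length ⊓ (w'.length - x.length) = w.length := by
          rw [hlw']; omega
        rw [hmin, List.drop_drop] at hmid
        -- hmid : ((ψ a ++ w').drop (i + x.length)).take w.length = w
        rw [hU, List.append_assoc x, add_comm i x.length, List.drop_length_add_append] at hmid
        rw [List.drop_append] at hmid
        have hdx : i - (φ a ++ w).length = 0 := by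
          simp only [List.length_append]; omega
        rw [hdx, List.drop_zero, List.take_append_of_le_length (by
          rw [List.length_drop, List.length_append]; omega)] at hmid
        have : i ∈ occs w (φ a ++ w) := by
          rw [mem_occs]
          exact ⟨by simp only [List.length_append]; omega, hmid⟩
        rw [hocc] at this
        simp only [Finset.mem_insert, Finset.mem_singleton] at this
        omega
      · rintro (rfl | rfl)
        · refine ⟨by simp, ?_⟩
          rw [List.drop_zero, hU2, List.take_left]
        · refine ⟨by simp, ?_⟩
          rw [List.drop_left, List.take_length]
    · omega
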